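/- arXiv:2204.01472 — 3 statements merged into one kernel-verified Lean document; each statement's English description precedes it below -/
import Mathlib

section
/- Let R(t) solve Ṙ = −αR + αΨ(t)Ψ(t)ᵀ with R(0) = R₀ ⪰ 0 symmetric, α > 0. Suppose the persistent excitation condition ∫_t^{t+T} Ψ(τ)Ψ(τ)ᵀ dτ ⪰ δ·I holds for all t ≥ 0 with constants T, δ > 0. Then R(t) ⪰ δ α e^{−2αT} I for all t ≥ T. -/
open Matrix intervalIntegral

attribute [local instance] Matrix.frobeniusNormedAddCommGroup Matrix.frobeniusNormedSpace

noncomputable def qf {n : ℕ} (x y : Fin n → ℝ) : Matrix (Fin n) (Fin n) ℝ →L[ℝ] ℝ :=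
  LinearMap.toContinuousLinearMap
    { toFun := fun M => x ⬝ᵥ M *ᵥ y
      map_add' := by intro M N; simp [Matrix.add_mulVec, dotProduct_add]
      map_smul' := by intro c M; simp [Matrix.smul_mulVec, dotProduct_smul] }

@[simp] lemma qf_apply {n : ℕ} (x y : Fin n → ℝ) (M : Matrix (Fin n) (Fin n) ℝ) :
    qf x y M = x ⬝ᵥ M *ᵥ y := rfl

lemma qf_swap {n : ℕ} (x y : Fin n → ℝ) {M : Matrix (Fin n) (Fin n) ℝ} (h : Mᵀ = M) :
    qf x y M = qf y x M := by
  simp only [qf_apply]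
  rw [dotProduct_mulVec, dotProduct_comm, ← Matrix.mulVec_transpose, h]

/-- If `Ṙ = −αR + αΨΨᵀ` with `R(0) = R₀ ⪰ 0` symmetric, `α > 0`, and the
persistent excitation condition `∫_t^{t+T} ΨΨᵀ ⪰ δI` holds for all `t ≥ 0`, then
`R(t) ⪰ δ α e^{−2αT} I` for all `t ≥ T`. -/
theorem stmt1 {n m : ℕ} (R : ℝ → Matrix (Fin n) (Fin n) ℝ)
    (Ψ : ℝ → Matrix (Fin n) (Fin m) ℝ) (α T δ : ℝ)
    (hα : 0 < α) (hT : 0 < T) (hδ : 0 < δ)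
    (hΨ : Continuous Ψ)
    (hR0 : (R 0).PosSemidef)
    (hode : ∀ t, 0 ≤ t → HasDerivAt R (-α • R t + α • (Ψ t * (Ψ t)ᵀ)) t)
    (hPE : ∀ t, 0 ≤ t →
      ((∫ τ in t..(t + T), Ψ τ * (Ψ τ)ᵀ) - δ • (1 : Matrix (Fin n) (Fin n) ℝ)).PosSemidef) :
    ∀ t, T ≤ t →
      (R t - (δ * α * Real.exp (-2 * α * T)) • (1 : Matrix (Fin n) (Fin n) ℝ)).PosSemidef := by
  set P : ℝ → Matrix (Fin n) (Fin n) ℝ := fun τ => Ψ τ * (Ψ τ)ᵀ with hP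
  have hPcont : Continuous P := hΨ.matrix_mul hΨ.matrix_transpose
  have hPsymm : ∀ τ, (P τ)ᵀ = P τ := fun τ => by
    simp [hP, Matrix.transpose_mul]
  have hPpsd : ∀ τ, (P τ).PosSemidef := fun τ => by
    have := Matrix.posSemidef_self_mul_conjTranspose (Ψ τ)
    simpa [Matrix.conjTranspose_eq_transpose_of_trivial] using this
  have hPq : ∀ τ (x : Fin n → ℝ), 0 ≤ qf x x (P τ) := by
    intro τ x
    have := (hPpsd τ).dotProduct_mulVec_nonneg x
    simpa using this
  -- derivative of qf x y ∘ R
  have hqd : ∀ (x y : Fin n → ℝ) τ, 0 ≤ τ →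
      HasDerivAt (fun σ => qf x y (R σ))
        (-α * qf x y (R τ) + α * qf x y (P τ)) τ := by
    intro x y τ hτ
    have h1 := (qf x y).hasFDerivAt.comp_hasDerivAt τ (hode τ hτ)
    have : qf x y (-α • R τ + α • P τ) = -α * qf x y (R τ) + α * qf x y (P τ) := by
      simp [Matrix.add_mulVec, Matrix.neg_mulVec, Matrix.smul_mulVec,
        dotProduct_add, dotProduct_neg, dotProduct_smul, smul_eq_mul]
    rw [← this]
    exact h1
  -- symmetry of R t for t ≥ 0
  have hsymm : ∀ (x y : Fin n → ℝ) t, 0 ≤ t → qf x y (R t) = qf y x (R t) := by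
    intro x y t ht
    set d : ℝ → ℝ := fun σ => qf x y (R σ) - qf y x (R σ) with hd
    have hR0symm : (R 0)ᵀ = R 0 := by
      have h0 : (R 0)ᴴ = R 0 := hR0.1
      rwa [Matrix.conjTranspose_eq_transpose_of_trivial] at h0
    have hd0 : d 0 = 0 := by
      have h := qf_swap x y hR0symm
      simp only [qf_apply] at h
      simp [hd, h]
    have hdd : ∀ σ, 0 ≤ σ → HasDerivAt d (-α * d σ) σ := by
      intro σ hσ
      have h1 := (hqd x y σ hσ).sub (hqd y x σ hσ)
      have key : qf x y (P σ) = qf y x (P σ) := qf_swap x y (hPsymm σ)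
      refine h1.congr_deriv ?_
      rw [key]; simp [hd]; ring
    set u : ℝ → ℝ := fun σ => Real.exp (α * σ) * d σ with hu
    have hud : ∀ σ, 0 ≤ σ → HasDerivAt u 0 σ := by
      intro σ hσ
      have he : HasDerivAt (fun σ => Real.exp (α * σ)) (α * Real.exp (α * σ)) σ := by
        have := ((hasDerivAt_id σ).const_mul α).exp
        simpa [mul_comm] using this
      have := he.mul (hdd σ hσ)
      refine this.congr_deriv ?_
      ring
    have hFTC : (∫ σ in (0:ℝ)..t, (0:ℝ)) = u t - u 0 := by
      apply intervalIntegral.integral_eq_sub_of_hasDerivAt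
      · intro σ hσ
        rw [Set.uIcc_of_le ht] at hσ
        exact hud σ hσ.1
      · exact intervalIntegrable_const
    have hu0 : u 0 = 0 := by simp [hu, hd0]
    have hut : u t = 0 := by
      have h2 : (0:ℝ) = u t - u 0 := by simpa using hFTC
      linarith
    have hdt : d t = 0 := by
      simp only [hu] at hut
      rcases mul_eq_zero.mp hut with h | h
      · exact absurd h (Real.exp_ne_zero _)
      · exact h
    simpa [hd, sub_eq_zero] using hdt
  intro t ht
  have ht0 : 0 ≤ t := le_trans hT.le ht
  have hherm : (R t).IsHermitian := by
    rw [Matrix.IsHermitian, Matrix.conjTranspose_eq_transpose_of_trivial]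
    ext i j
    have := hsymm (Pi.single j 1) (Pi.single i 1) t ht0
    simpa [Matrix.mulVec_single, single_dotProduct] using this
  set c : ℝ := δ * α * Real.exp (-2 * α * T) with hc
  refine Matrix.PosSemidef.of_dotProduct_mulVec_nonneg ?_ ?_
  · -- Hermitian part
    rw [Matrix.IsHermitian, Matrix.conjTranspose_sub, Matrix.conjTranspose_smul,
      Matrix.conjTranspose_one, hherm.eq]
    simp
  · intro x
    have hX : 0 ≤ x ⬝ᵥ x := Finset.sum_nonneg fun i _ => mul_self_nonneg (x i)
    set s : ℝ := t - T with hsdef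
    have hs0 : 0 ≤ s := by rw [hsdef]; linarith
    have hst : s ≤ t := by rw [hsdef]; linarith
    have hgcont : Continuous fun τ => qf x x (P τ) := (qf x x).continuous.comp hPcont
    have hicont : Continuous fun τ => α * Real.exp (α * τ) * qf x x (P τ) := by
      exact (continuous_const.mul (Real.continuous_exp.comp (continuous_const.mul
        continuous_id))).mul hgcont
    have hhder : ∀ τ, 0 ≤ τ → HasDerivAt (fun σ => Real.exp (α * σ) * qf x x (R σ))
        (α * Real.exp (α * τ) * qf x x (P τ)) τ := by
      intro τ hτ
      have he : HasDerivAt (fun σ => Real.exp (α * σ)) (α * Real.exp (α * τ)) τ := by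
        simpa [mul_comm] using ((hasDerivAt_id τ).const_mul α).exp
      have := he.mul (hqd x x τ hτ)
      refine this.congr_deriv ?_
      ring
    have hFTC : ∀ a b : ℝ, 0 ≤ a → a ≤ b →
        Real.exp (α * b) * qf x x (R b) - Real.exp (α * a) * qf x x (R a)
          = ∫ τ in a..b, α * Real.exp (α * τ) * qf x x (P τ) := by
      intro a b ha hab
      symm
      apply intervalIntegral.integral_eq_sub_of_hasDerivAt
      · intro τ hτ
        rw [Set.uIcc_of_le hab] at hτ
        exact hhder τ (le_trans ha hτ.1)
      · exact hicont.intervalIntegrable a b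
    have hf0 : 0 ≤ qf x x (R 0) := by simpa using hR0.dotProduct_mulVec_nonneg x
    have hhs : 0 ≤ Real.exp (α * s) * qf x x (R s) := by
      have h1 := hFTC 0 s le_rfl hs0
      have h2 : 0 ≤ ∫ τ in (0:ℝ)..s, α * Real.exp (α * τ) * qf x x (P τ) :=
        intervalIntegral.integral_nonneg hs0 (fun τ _ =>
          mul_nonneg (mul_nonneg hα.le (Real.exp_pos _).le) (hPq τ x))
      simp only [mul_zero, Real.exp_zero, one_mul] at h1
      linarith
    have hint : δ * (x ⬝ᵥ x) ≤ ∫ τ in s..t, qf x x (P τ) := by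
      have hpe := (hPE s hs0).dotProduct_mulVec_nonneg x
      have hcomm : qf x x (∫ τ in s..(s + T), P τ) = ∫ τ in s..(s + T), qf x x (P τ) :=
        (ContinuousLinearMap.intervalIntegral_comp_comm _ (hPcont.intervalIntegrable _ _)).symm
      have hts : s + T = t := by rw [hsdef]; ring
      rw [hts] at hcomm
      simp only [Matrix.sub_mulVec, Matrix.smul_mulVec, Matrix.one_mulVec,
        dotProduct_sub, dotProduct_smul, smul_eq_mul, star_trivial, sub_nonneg] at hpe
      calc δ * (x ⬝ᵥ x) ≤ x ⬝ᵥ (∫ τ in s..(s + T), P τ) *ᵥ x := hpe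
        _ = qf x x (∫ τ in s..t, P τ) := by rw [hts]; rfl
        _ = ∫ τ in s..t, qf x x (P τ) := hcomm
    have hmono : α * δ * (x ⬝ᵥ x) * Real.exp (α * s)
        ≤ ∫ τ in s..t, α * Real.exp (α * τ) * qf x x (P τ) := by
      have h1 : (∫ τ in s..t, α * Real.exp (α * s) * qf x x (P τ))
          ≤ ∫ τ in s..t, α * Real.exp (α * τ) * qf x x (P τ) := by
        apply intervalIntegral.integral_mono_on hst
          ((continuous_const.mul hgcont).intervalIntegrable s t)
          (hicont.intervalIntegrable s t)
        intro τ hτ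
        exact mul_le_mul_of_nonneg_right
          (mul_le_mul_of_nonneg_left
            (Real.exp_le_exp.2 (mul_le_mul_of_nonneg_left hτ.1 hα.le)) hα.le)
          (hPq τ x)
      have h2 : (∫ τ in s..t, α * Real.exp (α * s) * qf x x (P τ))
          = α * Real.exp (α * s) * ∫ τ in s..t, qf x x (P τ) :=
        intervalIntegral.integral_const_mul _ _
      have h3 : α * Real.exp (α * s) * (δ * (x ⬝ᵥ x))
          ≤ α * Real.exp (α * s) * ∫ τ in s..t, qf x x (P τ) :=
        mul_le_mul_of_nonneg_left hint (by positivity)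
      calc α * δ * (x ⬝ᵥ x) * Real.exp (α * s)
          = α * Real.exp (α * s) * (δ * (x ⬝ᵥ x)) := by ring
        _ ≤ α * Real.exp (α * s) * ∫ τ in s..t, qf x x (P τ) := h3
        _ = ∫ τ in s..t, α * Real.exp (α * s) * qf x x (P τ) := h2.symm
        _ ≤ _ := h1
    have hmain := hFTC s t hs0 hst
    have key : Real.exp (α * t) * (c * (x ⬝ᵥ x)) ≤ Real.exp (α * t) * qf x x (R t) := by
      have e3 : Real.exp (α * t) * (c * (x ⬝ᵥ x))
          = α * δ * (x ⬝ᵥ x) * Real.exp (α * t + -2 * α * T) := by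
        rw [hc, Real.exp_add]; ring
      have e2 : Real.exp (α * t + -2 * α * T) ≤ Real.exp (α * s) :=
        Real.exp_le_exp.2 (by rw [hsdef]; nlinarith)
      have e4 : α * δ * (x ⬝ᵥ x) * Real.exp (α * t + -2 * α * T)
          ≤ α * δ * (x ⬝ᵥ x) * Real.exp (α * s) :=
        mul_le_mul_of_nonneg_left e2 (by positivity)
      linarith
    have hfin : c * (x ⬝ᵥ x) ≤ qf x x (R t) :=
      le_of_mul_le_mul_left key (Real.exp_pos _)
    simp only [qf_apply] at hfin
    simpa [Matrix.sub_mulVec, Matrix.smul_mulVec, Matrix.one_mulVec,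
      dotProduct_sub, dotProduct_smul, smul_eq_mul, star_trivial, sub_nonneg] using hfin
end

section
/- Let V : [0,∞) → ℝ be a nonnegative absolutely continuous function satisfying V̇(t) ≤ c(t)·V(t) for a locally integrable function c. Suppose there exist T > 0 and κ > 0 such that ∫_t^{t+T} c(τ) dτ ≤ −κ for all t ≥ 0. Then V(t) → 0 exponentially fast: V(t) ≤ C·e^{−(κ/(2T))t}·V(0) for a suitable constant C depending on bounds of c. -/
open intervalIntegral

/-- If `V ≥ 0` is differentiable with `V̇ ≤ c(t)V(t)` for a locally integrable
function `c` bounded above, and `∫_t^{t+T} c ≤ −κ` over every window of length `T > 0`,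
then `V(t) ≤ C e^{−(κ/(2T))t} V(0)` for a suitable constant `C`. -/
theorem stmt8 (V c : ℝ → ℝ) (T κ cbar : ℝ) (hT : 0 < T) (hκ : 0 < κ)
    (hVnonneg : ∀ t, 0 ≤ t → 0 ≤ V t)
    (hVdiff : ∀ t, 0 ≤ t → HasDerivAt V (deriv V t) t)
    (hder : ∀ t, 0 ≤ t → deriv V t ≤ c t * V t)
    (hcint : ∀ a b : ℝ, IntervalIntegrable c MeasureTheory.volume a b)
    (hcbd : ∀ t, 0 ≤ t → c t ≤ cbar)
    (hwin : ∀ t, 0 ≤ t → (∫ τ in t..(t + T), c τ) ≤ -κ) :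
    ∃ C > 0, ∀ t, 0 ≤ t → V t ≤ C * Real.exp (-(κ / (2 * T)) * t) * V 0 := by
  have hVcont : ∀ s, (0:ℝ) ≤ s → ContinuousAt V s := fun s hs => (hVdiff s hs).continuousAt
  -- bound the integral of c by cbar·(b-a) on [a,b] ⊆ [0,∞)
  have intbd : ∀ a b : ℝ, 0 ≤ a → a ≤ b → (∫ s in a..b, c s) ≤ cbar * (b - a) := by
    intro a b ha hab
    have h1 : (∫ s in a..b, c s) ≤ ∫ s in a..b, cbar := by
      apply intervalIntegral.integral_mono_on hab (hcint a b) intervalIntegrable_const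
      intro x hx; exact hcbd x (ha.trans hx.1)
    rw [intervalIntegral.integral_const, smul_eq_mul, mul_comm] at h1; exact h1
  -- Grönwall step via log
  have gron : ∀ a b : ℝ, 0 ≤ a → a ≤ b → (∀ s ∈ Set.Icc a b, 0 < V s) →
      Real.log (V b) - Real.log (V a) ≤ ∫ s in a..b, c s := by
    intro a b ha hab hpos
    apply intervalIntegral.sub_le_integral_of_hasDeriv_right_of_le
      (g := fun y => Real.log (V y)) (g' := fun x => deriv V x / V x) (φ := c) hab
    · intro x hx
      exact ((Real.continuousAt_log (ne_of_gt (hpos x hx))).comp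
        (hVcont x (ha.trans hx.1))).continuousWithinAt
    · intro x hx
      have hx' : x ∈ Set.Icc a b := ⟨hx.1.le, hx.2.le⟩
      have h1 : HasDerivAt (fun y => Real.log (V y)) (deriv V x / V x) x := by
        have := (Real.hasDerivAt_log (ne_of_gt (hpos x hx'))).comp x (hVdiff x (ha.trans hx'.1))
        simpa [div_eq_inv_mul, Function.comp_def] using this
      exact h1.hasDerivWithinAt
    · exact (integrableOn_Icc_iff_integrableOn_Ioc).2 (hcint a b).1
    · intro x hx
      have hx' : x ∈ Set.Icc a b := ⟨hx.1.le, hx.2.le⟩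
      rw [div_le_iff₀ (hpos x hx')]
      exact hder x (ha.trans hx'.1)
  -- positivity propagates backwards
  have pos_all : ∀ t, 0 ≤ t → 0 < V t → ∀ s ∈ Set.Icc (0:ℝ) t, 0 < V s := by
    intro t ht hVt
    by_contra h
    push_neg at h
    obtain ⟨s0, hs0, hVs0⟩ := h
    have hVs0' : V s0 = 0 := le_antisymm hVs0 (hVnonneg s0 hs0.1)
    -- set of zeros in [s0, t]
    set S : Set ℝ := {s ∈ Set.Icc s0 t | V s = 0} with hS
    have hSne : S.Nonempty := ⟨s0, ⟨⟨le_refl _, hs0.2⟩, hVs0'⟩⟩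
    have hSbdd : BddAbove S := ⟨t, fun x hx => hx.1.2⟩
    set s2 := sSup S with hs2def
    have hScl : IsClosed S := by
      have hVc : ContinuousOn V (Set.Icc s0 t) := fun x hx =>
        (hVcont x (hs0.1.trans hx.1)).continuousWithinAt
      have := hVc.preimage_isClosed_of_isClosed isClosed_Icc (isClosed_singleton (x := (0:ℝ)))
      exact this
    have hs2S : s2 ∈ S := hScl.csSup_mem hSne hSbdd
    have hs2t : s2 ≤ t := hs2S.1.2
    have hs20 : 0 ≤ s2 := hs0.1.trans hs2S.1.1
    have hVs2 : V s2 = 0 := hs2S.2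
    have hs2lt : s2 < t := lt_of_le_of_ne hs2t (fun h => by rw [h] at hVs2; exact absurd hVs2 (ne_of_gt hVt))
    -- V > 0 on (s2, t]
    have hposIoc : ∀ s ∈ Set.Ioc s2 t, 0 < V s := by
      intro s hs
      rcases lt_or_eq_of_le (hVnonneg s (hs20.trans hs.1.le)) with h | h
      · exact h
      · exfalso
        have : s ∈ S := ⟨⟨hs2S.1.1.trans hs.1.le, hs.2⟩, h.symm⟩
        exact absurd (le_csSup hSbdd this) (not_le.mpr hs.1)
    -- pick s close to s2 with V s tiny
    have hc := hVcont s2 hs20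
    rw [Metric.continuousAt_iff] at hc
    set ε := Real.exp (Real.log (V t) - |cbar| * t - 1) with hε
    have hεpos : 0 < ε := Real.exp_pos _
    obtain ⟨δ, hδ, hball⟩ := hc ε hεpos
    set s := min (s2 + δ / 2) t with hsdef
    have hss2 : s2 < s := lt_min (by linarith) hs2lt
    have hst : s ≤ t := min_le_right _ _
    have hsS : s ∈ Set.Ioc s2 t := ⟨hss2, hst⟩
    have hVs : V s < ε := by
      have : dist s s2 < δ := by
        rw [Real.dist_eq, abs_of_pos (by linarith)]
        have : s ≤ s2 + δ / 2 := min_le_left _ _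
        linarith
      have := hball this
      rw [Real.dist_eq, hVs2, sub_zero] at this
      calc V s ≤ |V s| := le_abs_self _
        _ < ε := this
    -- Grönwall on [s, t]
    have hpos' : ∀ u ∈ Set.Icc s t, 0 < V u := fun u hu =>
      hposIoc u ⟨hss2.trans_le hu.1, hu.2⟩
    have h1 := gron s t (hs20.trans hss2.le) hst hpos'
    have h2 : (∫ u in s..t, c u) ≤ |cbar| * t := by
      calc (∫ u in s..t, c u) ≤ cbar * (t - s) := intbd s t (hs20.trans hss2.le) hst
        _ ≤ |cbar| * (t - s) := by
            apply mul_le_mul_of_nonneg_right (le_abs_self _); linarith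
        _ ≤ |cbar| * t := by
            apply mul_le_mul_of_nonneg_left _ (abs_nonneg _)
            linarith [hs20.trans hss2.le]
    have hlogVs : Real.log (V s) < Real.log (V t) - |cbar| * t - 1 := by
      calc Real.log (V s) < Real.log ε := Real.log_lt_log (hpos' s ⟨le_refl _, hst⟩) hVs
        _ = Real.log (V t) - |cbar| * t - 1 := Real.log_exp _
    linarith
  -- integrals over multiple windows
  have key : ∀ n : ℕ, (∫ s in (0:ℝ)..(n * T), c s) ≤ -(n * κ) := by
    intro n
    induction n with
    | zero => simp
    | succ n ih =>
      have hsplit : (∫ s in (0:ℝ)..(n * T), c s) + (∫ s in (n * T : ℝ)..(n * T + T), c s)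
          = ∫ s in (0:ℝ)..(n * T + T), c s :=
        intervalIntegral.integral_add_adjacent_intervals (hcint _ _) (hcint _ _)
      have hw := hwin (n * T) (by positivity)
      have : (∫ s in (0:ℝ)..(n * T + T), c s) ≤ -(n * κ) + -κ := by
        rw [← hsplit]; exact add_le_add ih hw
      have heq : ((n : ℝ) + 1) * T = n * T + T := by ring
      push_cast
      rw [heq]
      linarith
  -- the constant
  refine ⟨Real.exp (κ + max cbar 0 * T), Real.exp_pos _, ?_⟩
  intro t ht
  rcases lt_or_eq_of_le (hVnonneg t ht) with hVt | hVt
  swap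
  · rw [← hVt]
    have := hVnonneg 0 le_rfl
    positivity
  -- main case : V t > 0
  have hpos := pos_all t ht hVt
  have hV0 : 0 < V 0 := hpos 0 ⟨le_refl _, ht⟩
  set n := ⌊t / T⌋₊ with hn
  have hnT : (n : ℝ) * T ≤ t := by
    have := Nat.floor_le (a := t / T) (by positivity)
    calc (n:ℝ) * T ≤ t / T * T := mul_le_mul_of_nonneg_right this hT.le
      _ = t := by field_simp
  have hnT' : t < ((n : ℝ) + 1) * T := by
    have := Nat.lt_floor_add_one (t / T)
    calc t = t / T * T := by field_simp
      _ < ((n : ℝ) + 1) * T := by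
        apply mul_lt_mul_of_pos_right _ hT
        exact_mod_cast this
  have hnT0 : (0:ℝ) ≤ n * T := by positivity
  -- integral bound on [0, t]
  have hint : (∫ s in (0:ℝ)..t, c s) ≤ -(n * κ) + max cbar 0 * T := by
    have hsplit : (∫ s in (0:ℝ)..((n:ℝ) * T), c s) + (∫ s in ((n:ℝ) * T)..t, c s)
        = ∫ s in (0:ℝ)..t, c s :=
      intervalIntegral.integral_add_adjacent_intervals (hcint _ _) (hcint _ _)
    have htail : (∫ s in ((n:ℝ) * T)..t, c s) ≤ max cbar 0 * T := by
      calc (∫ s in ((n:ℝ) * T)..t, c s) ≤ cbar * (t - n * T) := intbd _ _ hnT0 hnT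
        _ ≤ max cbar 0 * (t - n * T) := by
            apply mul_le_mul_of_nonneg_right (le_max_left _ _); linarith
        _ ≤ max cbar 0 * T := by
            apply mul_le_mul_of_nonneg_left _ (le_max_right _ _)
            nlinarith
    rw [← hsplit]
    exact add_le_add (key n) htail
  have hgron := gron 0 t le_rfl ht hpos
  -- -(n κ) ≤ κ - (κ/(2T)) t
  have hdecay : -((n:ℝ) * κ) ≤ κ - κ / (2 * T) * t := by
    have h1 : t / T - 1 < (n : ℝ) := by
      rw [div_sub_one (ne_of_gt hT), div_lt_iff₀ hT]
      linarith
    have h2 : κ / (2 * T) * t ≤ κ / T * t := by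
      apply mul_le_mul_of_nonneg_right _ ht
      apply div_le_div_of_nonneg_left hκ.le hT
      linarith
    have h3 : κ / T * t = t / T * κ := by field_simp
    nlinarith [mul_lt_mul_of_pos_right h1 hκ]
  -- conclude
  have hlog : Real.log (V t) ≤ Real.log (V 0) + (κ + max cbar 0 * T) + (-(κ / (2 * T)) * t) := by
    have := hgron.trans hint
    linarith
  calc V t = Real.exp (Real.log (V t)) := (Real.exp_log hVt).symm
    _ ≤ Real.exp (Real.log (V 0) + (κ + max cbar 0 * T) + (-(κ / (2 * T)) * t)) :=
        Real.exp_le_exp.mpr hlog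
    _ = Real.exp (κ + max cbar 0 * T) * Real.exp (-(κ / (2 * T)) * t) * V 0 := by
        rw [Real.exp_add, Real.exp_add, Real.exp_log hV0]; ring
end

section
/- Consider the scalar ODE ṗ = αp − αp²ψ(t)² with α > 0, p(0) > 0, ψ continuous and bounded. Then p(t) > 0 for all t ≥ 0, and if ∫_t^{t+T} ψ(τ)² dτ ≥ δ > 0 for all t ≥ 0, then p(t) ≤ (δα e^{−2αT})⁻¹ for all t ≥ T. -/
open intervalIntegral

/-- For the scalar ODE `ṗ = αp − αp²ψ(t)²` with `α > 0`, `p(0) > 0`, `ψ`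
continuous and bounded, `p(t) > 0` for all `t ≥ 0`; and if `∫_t^{t+T} ψ² ≥ δ > 0` for all
`t ≥ 0`, then `p(t) ≤ (δ α e^{−2αT})⁻¹` for all `t ≥ T`. -/
theorem stmt11 (p ψ : ℝ → ℝ) (α T δ ψbar : ℝ)
    (hα : 0 < α) (hT : 0 < T) (hδ : 0 < δ)
    (hψc : Continuous ψ) (hψb : ∀ t, |ψ t| ≤ ψbar)
    (hp0 : 0 < p 0)
    (hode : ∀ t, 0 ≤ t → HasDerivAt p (α * p t - α * (p t) ^ 2 * (ψ t) ^ 2) t)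
    (hPE : ∀ t, 0 ≤ t → δ ≤ ∫ τ in t..(t + T), (ψ τ) ^ 2) :
    (∀ t, 0 ≤ t → 0 < p t) ∧
    (∀ t, T ≤ t → p t ≤ (δ * α * Real.exp (-2 * α * T))⁻¹) := by
  -- q : continuous extension of p
  set q : ℝ → ℝ := fun t => p (max t 0) with hqdef
  have hpc : ∀ t : ℝ, 0 ≤ t → ContinuousAt p t := fun t ht => (hode t ht).continuousAt
  have hqc : Continuous q := by
    rw [continuous_iff_continuousAt]
    intro t
    have h1 : ContinuousAt (fun s : ℝ => max s 0) t :=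
      (continuous_id.max continuous_const).continuousAt
    show ContinuousAt (p ∘ fun s : ℝ => max s 0) t
    exact ContinuousAt.comp (x := t) (hpc _ (le_max_right t 0)) h1
  have hq : ∀ t : ℝ, 0 ≤ t → q t = p t := fun t ht => by simp [hqdef, max_eq_left ht]
  set f : ℝ → ℝ := fun τ => q τ * ψ τ ^ 2 with hfdef
  have hfc : Continuous f := hqc.mul (hψc.pow 2)
  set I : ℝ → ℝ := fun t => ∫ τ in (0:ℝ)..t, f τ with hIdef
  have hI : ∀ t : ℝ, HasDerivAt I (f t) t := fun t =>
    integral_hasDerivAt_right (hfc.intervalIntegrable 0 t)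
      (hfc.stronglyMeasurableAtFilter _ _) hfc.continuousAt
  -- g := p * exp (α I - α t) is constant on [0, ∞)
  set g : ℝ → ℝ := fun t => p t * Real.exp (α * I t - α * t) with hgdef
  have hg' : ∀ t : ℝ, 0 ≤ t → HasDerivAt g 0 t := by
    intro t ht
    have h1 : HasDerivAt (fun s => α * I s - α * s) (α * f t - α) t :=
      ((hI t).const_mul α).sub ((hasDerivAt_id t).const_mul α |>.congr_deriv (by ring))
    have h2 := (hode t ht).mul h1.exp
    refine h2.congr_deriv ?_
    have hft : f t = p t * ψ t ^ 2 := by rw [hfdef]; simp only; rw [hq t ht]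
    rw [hft]; ring
  have hgc : ∀ b : ℝ, 0 ≤ b → g b = g 0 := by
    intro b hb
    have := constant_of_has_deriv_right_zero (f := g) (a := 0) (b := b)
      (fun x hx => ((hg' x hx.1).continuousAt).continuousWithinAt)
      (fun x hx => ((hg' x hx.1).hasDerivWithinAt))
    exact this b ⟨hb, le_refl b⟩
  have hI0 : I 0 = 0 := by simp [hIdef]
  have hg0 : g 0 = p 0 := by simp [hgdef, hI0]
  have hps : ∀ t : ℝ, 0 ≤ t → p t = p 0 * Real.exp (α * t - α * I t) := by
    intro t ht
    have h := (hgc t ht).trans hg0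
    rw [hgdef] at h
    have he : Real.exp (α * I t - α * t) ≠ 0 := Real.exp_ne_zero _
    rw [show α * t - α * I t = -(α * I t - α * t) by ring, Real.exp_neg, ← h,
      mul_assoc, mul_inv_cancel₀ he, mul_one]
  have hpos : ∀ t : ℝ, 0 ≤ t → 0 < p t := by
    intro t ht
    rw [hps t ht]
    positivity
  refine ⟨hpos, ?_⟩
  intro t ht
  have ht0 : (0:ℝ) ≤ t := le_trans hT.le ht
  have htT : (0:ℝ) ≤ t - T := by linarith
  -- h := exp (α I) / p 0, has derivative α ψ² e^{ατ} for τ ≥ 0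
  set H : ℝ → ℝ := fun s => Real.exp (α * I s) / p 0 with hHdef
  have hH' : ∀ x : ℝ, 0 ≤ x →
      HasDerivAt H (α * ψ x ^ 2 * Real.exp (α * x)) x := by
    intro x hx
    have h1 : HasDerivAt H (Real.exp (α * I x) * (α * f x) / p 0) x :=
      (((hI x).const_mul α).exp).div_const (p 0)
    convert h1 using 1
    have hfx : f x = p x * ψ x ^ 2 := by rw [hfdef]; simp only; rw [hq x hx]
    rw [eq_div_iff hp0.ne', hfx, hps x hx]
    have key : Real.exp (α * I x) * Real.exp (α * x - α * I x) = Real.exp (α * x) := by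
      rw [← Real.exp_add]; ring_nf
    linear_combination (-(α * ψ x ^ 2 * p 0)) * key
  -- FTC on [t-T, t]
  have hDc : Continuous (fun τ => α * ψ τ ^ 2 * Real.exp (α * τ)) :=
    (continuous_const.mul (hψc.pow 2)).mul
      (Real.continuous_exp.comp (continuous_const.mul continuous_id))
  have hftc : (∫ τ in (t - T)..t, α * ψ τ ^ 2 * Real.exp (α * τ)) = H t - H (t - T) := by
    apply integral_eq_sub_of_hasDerivAt
    · intro x hx
      rw [Set.uIcc_of_le (by linarith)] at hx
      exact hH' x (le_trans htT hx.1)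
    · exact hDc.intervalIntegrable _ _
  -- lower bound the integral
  have hmono : (∫ τ in (t - T)..t, (α * Real.exp (α * (t - T))) * ψ τ ^ 2)
      ≤ ∫ τ in (t - T)..t, α * ψ τ ^ 2 * Real.exp (α * τ) := by
    apply integral_mono_on (by linarith)
    · exact ((continuous_const.mul (hψc.pow 2)).intervalIntegrable _ _)
    · exact hDc.intervalIntegrable _ _
    · intro x hx
      have h1 : Real.exp (α * (t - T)) ≤ Real.exp (α * x) :=
        Real.exp_le_exp.mpr (by nlinarith [hx.1])
      have h2 : (α * ψ x ^ 2) * Real.exp (α * (t - T)) ≤ (α * ψ x ^ 2) * Real.exp (α * x) :=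
        mul_le_mul_of_nonneg_left h1 (by positivity)
      nlinarith [h2]
  have hint : δ ≤ ∫ τ in (t - T)..t, ψ τ ^ 2 := by
    have := hPE (t - T) htT
    rwa [sub_add_cancel] at this
  have hconst : (∫ τ in (t - T)..t, (α * Real.exp (α * (t - T))) * ψ τ ^ 2)
      = (α * Real.exp (α * (t - T))) * ∫ τ in (t - T)..t, ψ τ ^ 2 := by
    exact integral_const_mul _ _
  have hHT : α * Real.exp (α * (t - T)) * δ ≤ H t - H (t - T) := by
    rw [← hftc]
    calc α * Real.exp (α * (t - T)) * δ
        ≤ (α * Real.exp (α * (t - T))) * ∫ τ in (t - T)..t, ψ τ ^ 2 := by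
          apply mul_le_mul_of_nonneg_left hint
          positivity
      _ = _ := hconst.symm
      _ ≤ _ := hmono
  have hHtT : 0 < H (t - T) := by rw [hHdef]; positivity
  have hHt : α * δ * Real.exp (α * (t - T)) ≤ H t := by nlinarith
  -- conclude
  have hpt : p t * H t = Real.exp (α * t) := by
    rw [hHdef, hps t ht0]
    simp only
    have key : Real.exp (α * t - α * I t) * Real.exp (α * I t) = Real.exp (α * t) := by
      rw [← Real.exp_add]; ring_nf
    field_simp
    rw [← Real.exp_add]; ring_nf
  have hA : 0 < Real.exp (α * (t - T)) := Real.exp_pos _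
  have hexp : Real.exp (α * t) = Real.exp (α * (t - T)) * Real.exp (α * T) := by
    rw [← Real.exp_add]; ring_nf
  have h1 : p t ≤ Real.exp (α * T) / (α * δ) := by
    rw [le_div_iff₀ (by positivity)]
    have h2 := mul_le_mul_of_nonneg_left hHt (hpos t ht0).le
    nlinarith [hpt, hexp, hA]
  have h2 : Real.exp (α * T) / (α * δ) ≤ (δ * α * Real.exp (-2 * α * T))⁻¹ := by
    rw [inv_eq_one_div, div_le_div_iff₀ (by positivity) (by positivity)]
    have key : Real.exp (α * T) * Real.exp (-2 * α * T) = Real.exp (-(α * T)) := by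
      rw [← Real.exp_add]; ring_nf
    have h3 : Real.exp (-(α * T)) ≤ 1 := Real.exp_le_one_iff.mpr (by nlinarith)
    have key2 : Real.exp (α * T) * (δ * α * Real.exp (-2 * α * T))
        = α * δ * Real.exp (-(α * T)) := by linear_combination (δ * α) * key
    have h4 : α * δ * Real.exp (-(α * T)) ≤ α * δ * 1 :=
      mul_le_mul_of_nonneg_left h3 (by positivity)
    linarith
  linarith
end
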